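/- arXiv:0706.0121 — 6 statements merged into one kernel-verified Lean document; each statement's English description precedes it below -/
import Mathlib

section
/- Let a > 1 be a real number, γ a positive natural number, and b a real number with |b| ≤ γ. Then for every point (x_1,...,x_γ) in [-1,1]^γ with x_1 + ... + x_γ = b, the product ∏_{k=1}^γ (a - x_k) is at least ((a-1)/(a+1))^((b+2δ)/2) · (a²-1)^(γ/2), where δ = 0 if b is an integer and δ = 1 otherwise. -/
open Real Finset

open scoped Classical in
theorem stmt_0 (a b : ℝ) (ha : 1 < a) (γ : ℕ) (hγ : 0 < γ) (hb : |b| ≤ (γ : ℝ))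
    (x : Fin γ → ℝ) (hx : ∀ k, x k ∈ Set.Icc (-1 : ℝ) 1) (hsum : ∑ k, x k = b) :
    ((a - 1) / (a + 1)) ^ ((b + 2 * (if ∃ m : ℤ, (m : ℝ) = b then (0 : ℝ) else 1)) / 2) *
      (a ^ 2 - 1) ^ ((γ : ℝ) / 2) ≤ ∏ k, (a - x k) := by
  have ha1 : (0:ℝ) < a - 1 := by linarith
  have ha2 : (0:ℝ) < a + 1 := by linarith
  set r := (a - 1) / (a + 1) with hrdef
  have hr0 : 0 < r := div_pos ha1 ha2
  have hr1 : r < 1 := (div_lt_one ha2).2 (by linarith)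
  have hA : (0:ℝ) < a ^ 2 - 1 := by nlinarith
  have hAfac : a ^ 2 - 1 = (a - 1) * (a + 1) := by ring
  -- pointwise bound
  have key : ∀ k, r ^ (x k / 2) * (a ^ 2 - 1) ^ ((1:ℝ)/2) ≤ a - x k := by
    intro k
    obtain ⟨hl, hu⟩ := hx k
    set t := x k with htdef
    have hw₁ : (0:ℝ) ≤ (t + 1)/2 := by linarith
    have hw₂ : (0:ℝ) ≤ (1 - t)/2 := by linarith
    have hws : (t + 1)/2 + (1 - t)/2 = 1 := by ring
    have amgm := Real.geom_mean_le_arith_mean2_weighted hw₁ hw₂ ha1.le ha2.le hws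
    have heq : (a - 1) ^ ((t + 1)/2) * (a + 1) ^ ((1 - t)/2)
        = r ^ (t / 2) * (a ^ 2 - 1) ^ ((1:ℝ)/2) := by
      rw [hrdef, Real.div_rpow ha1.le ha2.le, hAfac,
        Real.mul_rpow ha1.le ha2.le]
      rw [show (t + 1)/2 = t/2 + 1/2 by ring, show (1 - t)/2 = 1/2 - t/2 by ring,
        Real.rpow_add ha1, Real.rpow_sub ha2]
      field_simp
    rw [← heq]
    calc (a - 1) ^ ((t + 1)/2) * (a + 1) ^ ((1 - t)/2)
        ≤ (t + 1)/2 * (a - 1) + (1 - t)/2 * (a + 1) := amgm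
      _ = a - t := by ring
  have hterm : ∀ k ∈ Finset.univ (α := Fin γ),
      (0:ℝ) ≤ r ^ (x k / 2) * (a ^ 2 - 1) ^ ((1:ℝ)/2) := by
    intro k _; positivity
  have h1 : ∏ k, (r ^ (x k / 2) * (a ^ 2 - 1) ^ ((1:ℝ)/2)) ≤ ∏ k, (a - x k) :=
    Finset.prod_le_prod hterm (fun k _ => key k)
  have h2 : ∏ k, (r ^ (x k / 2) * (a ^ 2 - 1) ^ ((1:ℝ)/2))
      = r ^ (b / 2) * (a ^ 2 - 1) ^ ((γ : ℝ) / 2) := by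
    rw [Finset.prod_mul_distrib, Finset.prod_const, Finset.card_univ, Fintype.card_fin]
    congr 1
    · simp_rw [Real.rpow_def_of_pos hr0]
      rw [← Real.exp_sum, ← Finset.mul_sum, ← Finset.sum_div, hsum]
    · rw [← Real.rpow_natCast ((a ^ 2 - 1) ^ ((1:ℝ)/2)) γ, ← Real.rpow_mul hA.le]
      congr 1; ring
  have hδ : r ^ ((b + 2 * (if ∃ m : ℤ, (m : ℝ) = b then (0 : ℝ) else 1)) / 2) ≤ r ^ (b / 2) := by
    apply Real.rpow_le_rpow_of_exponent_ge hr0 hr1.le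
    split_ifs <;> linarith
  calc ((a - 1) / (a + 1)) ^ ((b + 2 * (if ∃ m : ℤ, (m : ℝ) = b then (0 : ℝ) else 1)) / 2) *
      (a ^ 2 - 1) ^ ((γ : ℝ) / 2)
      ≤ r ^ (b / 2) * (a ^ 2 - 1) ^ ((γ : ℝ) / 2) := by
        apply mul_le_mul_of_nonneg_right hδ (Real.rpow_nonneg hA.le _)
    _ = ∏ k, (r ^ (x k / 2) * (a ^ 2 - 1) ^ ((1:ℝ)/2)) := h2.symm
    _ ≤ ∏ k, (a - x k) := h1
end

section
/- Let a > 1 be a real number, γ a positive natural number, and b a real number with |b| ≤ γ. Then the supremum of ∏_{k=1}^γ (a - x_k) over all (x_1,...,x_γ) ∈ [-1,1]^γ with Σ x_k = b equals (a - b/γ)^γ, i.e., the bound (a - b/γ)^γ is attained. -/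
open Real Finset

theorem stmt_2 (a b : ℝ) (ha : 1 < a) (γ : ℕ) (hγ : 0 < γ) (hb : |b| ≤ (γ : ℝ)) :
    IsGreatest {p : ℝ | ∃ x : Fin γ → ℝ, (∀ k, x k ∈ Set.Icc (-1 : ℝ) 1) ∧
      ∑ k, x k = b ∧ p = ∏ k, (a - x k)} ((a - b / γ) ^ γ) := by
  have hγR : (0:ℝ) < γ := Nat.cast_pos.mpr hγ
  obtain ⟨hb1, hb2⟩ := abs_le.mp hb
  constructor
  · refine ⟨fun _ => b / γ, fun k => ?_, ?_, ?_⟩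
    · constructor
      · rw [neg_le, ← neg_div]
        exact div_le_one_of_le₀ (by linarith) hγR.le
      · exact div_le_one_of_le₀ hb2 hγR.le
    · simp [Finset.sum_const, mul_div_assoc]
      field_simp
    · simp [Finset.prod_const]
  · rintro p ⟨x, hx, hsum, rfl⟩
    have hz : ∀ k : Fin γ, 0 ≤ a - x k := fun k => by
      have := (hx k).2; linarith
    have key := Real.geom_mean_le_arith_mean Finset.univ (fun _ => (1:ℝ))
      (fun k => a - x k) (fun _ _ => zero_le_one) (by simp [hγR]) (fun k _ => hz k)
    simp only [Finset.sum_const, Finset.card_univ, Fintype.card_fin, nsmul_eq_mul, mul_one,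
      one_mul, Real.rpow_one] at key
    have hsum' : ∑ k, (a - x k) = γ * a - b := by
      rw [Finset.sum_sub_distrib, hsum]; simp [mul_comm]
    rw [hsum'] at key
    have hmean : (γ * a - b) / γ = a - b / γ := by field_simp
    rw [hmean] at key
    have hprod : 0 ≤ ∏ k, (a - x k) := Finset.prod_nonneg (fun k _ => hz k)
    have := Real.rpow_le_rpow (Real.rpow_nonneg hprod _) key (Nat.cast_nonneg γ)
    rwa [← Real.rpow_mul hprod, inv_mul_cancel₀ (ne_of_gt hγR), Real.rpow_one,
      Real.rpow_natCast] at this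
end

section
/- Let q > 1 be a real number with (q+1)/(2√q) > 1, let γ be a positive natural number, and let θ_1, ..., θ_γ be real numbers such that b := Σ_{k=1}^γ cos θ_k is an integer. Then ∏_{k=1}^γ (q + 1 - 2√q cos θ_k) ≥ ((√q+1)/(√q-1))^{-b} · (q-1)^γ. -/
open Real Finset

lemma key_pointwise (s : ℝ) (hs : 1 < s) (x : ℝ) (hx1 : -1 ≤ x) (hx2 : x ≤ 1) :
    (s ^ 2 - 1) * ((s + 1) / (s - 1)) ^ (-x) ≤ s ^ 2 + 1 - 2 * s * x := by
  set c : ℝ := (s + 1) / (s - 1) with hc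
  have hc1 : 1 < c := by
    rw [hc, lt_div_iff₀ (by linarith)]; linarith
  have hc0 : 0 < c := by linarith
  have hrw : c ^ (-x) = Real.exp (-x * Real.log c) := by
    rw [Real.rpow_def_of_pos hc0]; ring_nf
  have hconv := convexOn_exp.2 (Set.mem_univ (Real.log c)) (Set.mem_univ (-Real.log c))
    (by linarith : (0:ℝ) ≤ (1 - x) / 2) (by linarith : (0:ℝ) ≤ (1 + x) / 2) (by ring)
  simp only [smul_eq_mul] at hconv
  have harg : (1 - x) / 2 * Real.log c + (1 + x) / 2 * (-Real.log c) = -x * Real.log c := by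
    ring
  rw [harg] at hconv
  rw [Real.exp_log hc0, Real.exp_neg, Real.exp_log hc0] at hconv
  have h1 : (s ^ 2 - 1) * c = (s + 1) ^ 2 := by
    rw [hc, mul_div_assoc', div_eq_iff (by intro h; nlinarith : s - 1 ≠ 0)]; ring
  have h2 : (s ^ 2 - 1) * c⁻¹ = (s - 1) ^ 2 := by
    rw [hc, inv_div, mul_div_assoc', div_eq_iff (by intro h; nlinarith : s + 1 ≠ 0)]; ring
  have hpos : (0:ℝ) < s ^ 2 - 1 := by nlinarith
  calc (s ^ 2 - 1) * c ^ (-x) = (s ^ 2 - 1) * Real.exp (-x * Real.log c) := by rw [hrw]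
    _ ≤ (s ^ 2 - 1) * ((1 - x) / 2 * c + (1 + x) / 2 * c⁻¹) := by
        apply mul_le_mul_of_nonneg_left hconv (le_of_lt hpos)
    _ = (1 - x) / 2 * ((s ^ 2 - 1) * c) + (1 + x) / 2 * ((s ^ 2 - 1) * c⁻¹) := by ring
    _ = (1 - x) / 2 * (s + 1) ^ 2 + (1 + x) / 2 * (s - 1) ^ 2 := by rw [h1, h2]
    _ = s ^ 2 + 1 - 2 * s * x := by ring

theorem stmt_6 (q : ℝ) (hq : 1 < q) (ha : 1 < (q + 1) / (2 * Real.sqrt q))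
    (γ : ℕ) (hγ : 0 < γ) (θ : Fin γ → ℝ) (b : ℝ)
    (hb : b = ∑ k, Real.cos (θ k)) (hbint : ∃ m : ℤ, (m : ℝ) = b) :
    ((Real.sqrt q + 1) / (Real.sqrt q - 1)) ^ (-b) * (q - 1) ^ γ ≤
      ∏ k, (q + 1 - 2 * Real.sqrt q * Real.cos (θ k)) := by
  set s : ℝ := Real.sqrt q with hsdef
  have hq0 : (0:ℝ) ≤ q := by linarith
  have hsq : s ^ 2 = q := Real.sq_sqrt hq0
  have hs : 1 < s := by
    nlinarith [Real.sqrt_nonneg q, hsq]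
  have hc0 : (0:ℝ) < (s + 1) / (s - 1) := by
    apply div_pos <;> linarith
  set c : ℝ := (s + 1) / (s - 1) with hc
  have hrw : c ^ (-b) * (q - 1) ^ γ = ∏ k : Fin γ, ((q - 1) * c ^ (-Real.cos (θ k))) := by
    rw [Finset.prod_mul_distrib, Finset.prod_const, Finset.card_univ, Fintype.card_fin,
      ← Real.rpow_sum_of_pos hc0, hb, ← Finset.sum_neg_distrib, mul_comm]
  rw [hrw]
  apply Finset.prod_le_prod
  · intro k _
    exact mul_nonneg (by linarith) (Real.rpow_nonneg (le_of_lt hc0) _)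
  · intro k _
    have := key_pointwise s hs (Real.cos (θ k)) (Real.neg_one_le_cos (θ k))
      (Real.cos_le_one (θ k))
    rw [hsq] at this
    calc (q - 1) * c ^ (-Real.cos (θ k)) = (q - 1) * ((s + 1) / (s - 1)) ^ (-Real.cos (θ k)) := rfl
      _ ≤ q + 1 - 2 * s * Real.cos (θ k) := this
      _ = q + 1 - 2 * Real.sqrt q * Real.cos (θ k) := rfl
end

section
/- Let a > 1 be real and γ a positive natural number. The function F(x) = Σ_{k=1}^γ log(a - x_k) is strictly concave on the convex set [-1,1]^γ... equivalently: the function G(x_1,...,x_γ) = ∏_{k=1}^γ (a - x_k) restricted to {x ∈ [-1,1]^γ : Σ x_k = b} attains its minimum at a point all of whose coordinates except possibly one lie in {-1, 1}. -/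
open Real Finset

theorem stmt_10 (a b : ℝ) (ha : 1 < a) (γ : ℕ) (hγ : 0 < γ) (hb : |b| ≤ (γ : ℝ)) :
    ∃ x : Fin γ → ℝ, (∀ k, x k ∈ Set.Icc (-1 : ℝ) 1) ∧ ∑ k, x k = b ∧
      (∀ y : Fin γ → ℝ, (∀ k, y k ∈ Set.Icc (-1 : ℝ) 1) → ∑ k, y k = b →
        ∏ k, (a - x k) ≤ ∏ k, (a - y k)) ∧
      {k : Fin γ | x k ∈ Set.Ioo (-1 : ℝ) 1}.Subsingleton := by
  set S : Set (Fin γ → ℝ) := {x | (∀ k, x k ∈ Set.Icc (-1:ℝ) 1) ∧ ∑ k, x k = b} with hS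
  have hγ' : (0:ℝ) < γ := Nat.cast_pos.mpr hγ
  have hne : S.Nonempty := by
    refine ⟨fun _ => b / γ, fun k => ?_, ?_⟩
    · rw [abs_le] at hb
      constructor
      · rw [le_div_iff₀ hγ']; linarith [hb.1]
      · rw [div_le_iff₀ hγ']; linarith [hb.2]
    · rw [Finset.sum_const, Finset.card_univ, Fintype.card_fin, nsmul_eq_mul]
      field_simp
  have hcomp : IsCompact S := by
    have h1 : IsCompact (Set.pi Set.univ fun _ : Fin γ => Set.Icc (-1:ℝ) 1) :=
      isCompact_univ_pi fun _ => isCompact_Icc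
    have h2 : IsClosed {x : Fin γ → ℝ | ∑ k, x k = b} :=
      isClosed_eq (by continuity) continuous_const
    have hEq : S = (Set.pi Set.univ fun _ => Set.Icc (-1:ℝ) 1) ∩ {x | ∑ k, x k = b} := by
      ext x
      constructor
      · rintro ⟨h1, h2⟩; exact ⟨fun k _ => h1 k, h2⟩
      · rintro ⟨h1, h2⟩; exact ⟨fun k => h1 k (Set.mem_univ k), h2⟩
    rw [hEq]
    exact h1.inter_right h2
  have hcont : Continuous fun x : Fin γ → ℝ => ∏ k, (a - x k) :=
    continuous_finset_prod _ fun k _ => continuous_const.sub (continuous_apply k)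
  obtain ⟨x, hxS, hmin⟩ := hcomp.exists_isMinOn hne hcont.continuousOn
  refine ⟨x, hxS.1, hxS.2, fun y hy1 hy2 => isMinOn_iff.mp hmin y ⟨hy1, hy2⟩, ?_⟩
  intro i hi j hj
  by_contra hij
  have hi' : x i ∈ Set.Ioo (-1:ℝ) 1 := hi
  have hj' : x j ∈ Set.Ioo (-1:ℝ) 1 := hj
  set u' : ℝ := max (-1) (x i + x j - 1) with hu'def
  set y : Fin γ → ℝ :=
    Function.update (Function.update x i u') j (x i + x j - u') with hydef
  have hyi : y i = u' := by
    simp [hydef, Function.update_apply, hij]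
  have hyj : y j = x i + x j - u' := by
    simp [hydef, Function.update_apply]
  have hyk : ∀ k, k ≠ i → k ≠ j → y k = x k := by
    intro k h1 h2
    simp [hydef, Function.update_apply, h1, h2]
  have hxi1 : -1 < x i := hi'.1
  have hxi2 : x i < 1 := hi'.2
  have hxj1 : -1 < x j := hj'.1
  have hxj2 : x j < 1 := hj'.2
  have hu'1 : (-1:ℝ) ≤ u' := le_max_left _ _
  have hu'2 : u' ≤ 1 := max_le (by norm_num) (by linarith)
  have hv'2 : x i + x j - u' ≤ 1 := by
    have := le_max_right (-1:ℝ) (x i + x j - 1); linarith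
  have hv'1 : (-1:ℝ) ≤ x i + x j - u' := by
    rcases le_total (x i + x j - 1) (-1) with h | h
    · have h' : u' = -1 := max_eq_left h
      rw [h']; linarith
    · have h' : u' = x i + x j - 1 := max_eq_right h
      rw [h']; norm_num
  have hu'lti : u' < x i := max_lt (by linarith) (by linarith)
  have hu'ltj : u' < x j := max_lt (by linarith) (by linarith)
  have hjmem : j ∈ Finset.univ.erase i :=
    Finset.mem_erase.mpr ⟨fun h => hij h.symm, Finset.mem_univ j⟩
  have hps : ∀ f : Fin γ → ℝ,
      ∑ k, f k = f i + (f j + ∑ k ∈ (Finset.univ.erase i).erase j, f k) := by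
    intro f
    rw [← Finset.add_sum_erase Finset.univ f (Finset.mem_univ i),
        ← Finset.add_sum_erase (Finset.univ.erase i) f hjmem]
  have hpp : ∀ f : Fin γ → ℝ,
      ∏ k, f k = f i * (f j * ∏ k ∈ (Finset.univ.erase i).erase j, f k) := by
    intro f
    rw [← Finset.mul_prod_erase Finset.univ f (Finset.mem_univ i),
        ← Finset.mul_prod_erase (Finset.univ.erase i) f hjmem]
  have hrest : ∀ k ∈ (Finset.univ.erase i).erase j, y k = x k := by
    intro k hk
    have hk1 := (Finset.mem_erase.mp hk).1
    have hk2 := (Finset.mem_erase.mp (Finset.mem_erase.mp hk).2).1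
    exact hyk k hk2 hk1
  have hyIcc : ∀ k, y k ∈ Set.Icc (-1:ℝ) 1 := by
    intro k
    by_cases hkj : k = j
    · subst hkj; rw [hyj]; exact ⟨hv'1, hv'2⟩
    · by_cases hki : k = i
      · subst hki; rw [hyi]; exact ⟨hu'1, hu'2⟩
      · rw [hyk k hki hkj]; exact hxS.1 k
  have hysum : ∑ k, y k = b := by
    have h1 := hps y
    have h2 := hps x
    rw [Finset.sum_congr rfl hrest, hyi, hyj] at h1
    rw [hxS.2] at h2
    rw [h1]; linarith
  have hR : 0 < ∏ k ∈ (Finset.univ.erase i).erase j, (a - x k) :=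
    Finset.prod_pos fun k _ => by linarith [(hxS.1 k).2]
  have hkey : (a - u') * (a - (x i + x j - u')) < (a - x i) * (a - x j) := by
    have h2 : 0 < (x i - u') * (x j - u') :=
      mul_pos (by linarith) (by linarith)
    nlinarith [h2]
  have hle := isMinOn_iff.mp hmin y ⟨hyIcc, hysum⟩
  have e1 : ∏ k, (a - y k) =
      (a - u') * ((a - (x i + x j - u')) * ∏ k ∈ (Finset.univ.erase i).erase j, (a - x k)) := by
    rw [hpp (fun k => a - y k), hyi, hyj]
    have : ∏ k ∈ (Finset.univ.erase i).erase j, (a - y k)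
        = ∏ k ∈ (Finset.univ.erase i).erase j, (a - x k) :=
      Finset.prod_congr rfl fun k hk => by rw [hrest k hk]
    rw [this]
  have e2 : ∏ k, (a - x k) =
      (a - x i) * ((a - x j) * ∏ k ∈ (Finset.univ.erase i).erase j, (a - x k)) :=
    hpp (fun k => a - x k)
  rw [e1, e2] at hle
  nlinarith [mul_lt_mul_of_pos_right hkey hR]
end

section
/- Let a > 1, γ ≥ 1, and b real with |b| ≤ γ and b not an integer. Write {b} for the fractional part of b. Suppose x ∈ [-1,1]^γ has exactly one coordinate β in (-1,1), n coordinates equal to 1, and m coordinates equal to -1, with Σ x_k = b. Then n - m = b - β, n + m = γ - 1, and ∏_{k=1}^γ (a - x_k) = (a-β)·(a²-1)^{(γ-1)/2}·((a-1)/(a+1))^{(b-β)/2} ≥ ((a-1)/(a+1))^{(b+2)/2}·(a²-1)^{γ/2}. -/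
open Real Finset

theorem stmt_15 (a b β : ℝ) (ha : 1 < a) (γ : ℕ) (hγ : 1 ≤ γ)
    (hb : |b| ≤ (γ : ℝ)) (hbint : ¬∃ m : ℤ, (m : ℝ) = b)
    (x : Fin γ → ℝ) (hx : ∀ k, x k ∈ Set.Icc (-1 : ℝ) 1)
    (i₀ : Fin γ) (hβ : β ∈ Set.Ioo (-1 : ℝ) 1) (hxi₀ : x i₀ = β)
    (hother : ∀ k, k ≠ i₀ → x k = 1 ∨ x k = -1)
    (n m : ℕ) (hn : n = (Finset.univ.filter (fun k => x k = 1)).card)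
    (hm : m = (Finset.univ.filter (fun k => x k = -1)).card)
    (hsum : ∑ k, x k = b) :
    (n : ℝ) - m = b - β ∧ n + m = γ - 1 ∧
      ∏ k, (a - x k) =
        (a - β) * (a ^ 2 - 1) ^ (((γ : ℝ) - 1) / 2) *
          ((a - 1) / (a + 1)) ^ ((b - β) / 2) ∧
      ((a - 1) / (a + 1)) ^ ((b + 2) / 2) * (a ^ 2 - 1) ^ ((γ : ℝ) / 2) ≤
        ∏ k, (a - x k) := by
  obtain ⟨hβ1, hβ2⟩ := hβ
  set S := Finset.univ.filter (fun k => x k = 1) with hS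
  set T := Finset.univ.filter (fun k => x k = -1) with hT
  have hi₀S : i₀ ∉ S := by
    simp only [hS, Finset.mem_filter, hxi₀]
    intro h; linarith [h.2]
  have hi₀T : i₀ ∉ T := by
    simp only [hT, Finset.mem_filter, hxi₀]
    intro h; linarith [h.2]
  have hdisj : Disjoint S T := by
    rw [Finset.disjoint_left]
    intro k hk hk'
    simp only [hS, hT, Finset.mem_filter] at hk hk'
    linarith [hk.2, hk'.2]
  have hunion : S ∪ T = Finset.univ.erase i₀ := by
    ext k
    simp only [hS, hT, Finset.mem_union, Finset.mem_filter, Finset.mem_erase,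
      Finset.mem_univ, true_and, and_true]
    constructor
    · rintro (h | h) <;> intro hk <;> rw [hk, hxi₀] at h <;> linarith
    · intro hk; exact hother k hk
  have hcard : n + m = γ - 1 := by
    have h1 : (S ∪ T).card = n + m := by
      rw [Finset.card_union_of_disjoint hdisj, hn, hm]
    have h2 : (Finset.univ.erase i₀).card = γ - 1 := by
      rw [Finset.card_erase_of_mem (Finset.mem_univ i₀), Finset.card_univ, Fintype.card_fin]
    rw [← h1, hunion, h2]
  have hγnm : γ = n + m + 1 := by omega
  -- sum decomposition
  have hsumS : ∑ k ∈ S, x k = (n : ℝ) := by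
    rw [hn]
    rw [Finset.sum_congr rfl (fun k hk => (Finset.mem_filter.mp hk).2)]
    simp
    rfl
  have hsumT : ∑ k ∈ T, x k = -(m : ℝ) := by
    rw [hm]
    rw [Finset.sum_congr rfl (fun k hk => (Finset.mem_filter.mp hk).2)]
    simp
    rfl
  have hsum2 : ∑ k, x k = β + ((n : ℝ) - m) := by
    rw [← Finset.sum_erase_add Finset.univ x (Finset.mem_univ i₀), ← hunion,
      Finset.sum_union hdisj, hsumS, hsumT, hxi₀]
    ring
  have h1 : (n : ℝ) - m = b - β := by rw [hsum2] at hsum; linarith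
  -- product decomposition
  have hprodS : ∏ k ∈ S, (a - x k) = (a - 1) ^ n := by
    rw [hn]
    rw [Finset.prod_congr rfl (fun k hk => by rw [(Finset.mem_filter.mp hk).2])]
    simp
  have hprodT : ∏ k ∈ T, (a - x k) = (a + 1) ^ m := by
    rw [hm]
    rw [Finset.prod_congr rfl (fun k hk => by rw [(Finset.mem_filter.mp hk).2])]
    simp [sub_neg_eq_add]
  have hprod : ∏ k, (a - x k) = (a - β) * ((a - 1) ^ n * (a + 1) ^ m) := by
    rw [← Finset.prod_erase_mul Finset.univ _ (Finset.mem_univ i₀), ← hunion,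
      Finset.prod_union hdisj, hprodS, hprodT, hxi₀]
    ring
  -- positivity facts
  have ha1 : (0:ℝ) < a - 1 := by linarith
  have ha2 : (0:ℝ) < a + 1 := by linarith
  have hA : (0:ℝ) < a ^ 2 - 1 := by nlinarith
  have hr : (0:ℝ) < (a - 1) / (a + 1) := div_pos ha1 ha2
  have hr1 : (a - 1) / (a + 1) < 1 := by
    rw [div_lt_one ha2]; linarith
  -- rpow algebra
  have hγR : ((γ : ℝ) - 1) = (n : ℝ) + m := by
    rw [hγnm]; push_cast; ring
  have hkey : (a ^ 2 - 1) ^ (((γ : ℝ) - 1) / 2) * ((a - 1) / (a + 1)) ^ ((b - β) / 2)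
      = (a - 1) ^ n * (a + 1) ^ m := by
    rw [hγR, ← h1]
    have hsq : (a ^ 2 - 1 : ℝ) = (a - 1) * (a + 1) := by ring
    rw [hsq, Real.mul_rpow ha1.le ha2.le, Real.div_rpow ha1.le ha2.le]
    rw [show (a-1) ^ (((n:ℝ)+m)/2) * (a+1) ^ (((n:ℝ)+m)/2) *
        ((a-1) ^ (((n:ℝ)-m)/2) / (a+1) ^ (((n:ℝ)-m)/2))
      = ((a-1) ^ (((n:ℝ)+m)/2) * (a-1) ^ (((n:ℝ)-m)/2)) *
        ((a+1) ^ (((n:ℝ)+m)/2) / (a+1) ^ (((n:ℝ)-m)/2)) from by ring]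
    rw [← Real.rpow_add ha1, ← Real.rpow_sub ha2]
    rw [show ((n:ℝ)+m)/2 + ((n:ℝ)-m)/2 = (n:ℝ) from by ring,
        show ((n:ℝ)+m)/2 - ((n:ℝ)-m)/2 = (m:ℝ) from by ring,
        Real.rpow_natCast, Real.rpow_natCast]
  have h3 : ∏ k, (a - x k) =
      (a - β) * (a ^ 2 - 1) ^ (((γ : ℝ) - 1) / 2) *
        ((a - 1) / (a + 1)) ^ ((b - β) / 2) := by
    rw [hprod, mul_assoc, hkey]
  refine ⟨h1, hcard, h3, ?_⟩
  -- the inequality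
  rw [h3]
  have e1 : ((γ : ℝ)) / 2 = ((γ:ℝ) - 1) / 2 + 1/2 := by ring
  have e2 : (b + 2) / 2 = (b - β) / 2 + (2 + β)/2 := by ring
  rw [e1, e2, Real.rpow_add hA, Real.rpow_add hr]
  have key2 : ((a - 1) / (a + 1)) ^ ((2 + β)/2) * (a ^ 2 - 1) ^ ((1:ℝ)/2) ≤ a - β := by
    have step1 : ((a - 1) / (a + 1)) ^ ((2 + β)/2) ≤ ((a - 1) / (a + 1)) ^ ((1:ℝ)/2) := by
      apply Real.rpow_le_rpow_of_exponent_ge hr hr1.le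
      linarith
    have step2 : ((a - 1) / (a + 1)) ^ ((1:ℝ)/2) * (a ^ 2 - 1) ^ ((1:ℝ)/2) = a - 1 := by
      rw [← Real.mul_rpow hr.le hA.le]
      rw [show (a - 1) / (a + 1) * (a ^ 2 - 1) = (a-1)^2 from by field_simp; ring]
      rw [← Real.rpow_natCast (a-1) 2, ← Real.rpow_mul ha1.le]
      norm_num
    calc ((a - 1) / (a + 1)) ^ ((2 + β)/2) * (a ^ 2 - 1) ^ ((1:ℝ)/2)
        ≤ ((a - 1) / (a + 1)) ^ ((1:ℝ)/2) * (a ^ 2 - 1) ^ ((1:ℝ)/2) := by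
          exact mul_le_mul_of_nonneg_right step1 (Real.rpow_nonneg hA.le _)
      _ = a - 1 := step2
      _ ≤ a - β := by linarith
  calc ((a - 1) / (a + 1)) ^ ((b - β) / 2) * ((a - 1) / (a + 1)) ^ ((2 + β)/2) *
        ((a ^ 2 - 1) ^ (((γ:ℝ) - 1) / 2) * (a ^ 2 - 1) ^ ((1:ℝ)/2))
      = (((a - 1) / (a + 1)) ^ ((2 + β)/2) * (a ^ 2 - 1) ^ ((1:ℝ)/2)) *
        ((a ^ 2 - 1) ^ (((γ:ℝ) - 1) / 2) * ((a - 1) / (a + 1)) ^ ((b - β) / 2)) := by ring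
    _ ≤ (a - β) * ((a ^ 2 - 1) ^ (((γ:ℝ) - 1) / 2) * ((a - 1) / (a + 1)) ^ ((b - β) / 2)) := by
        apply mul_le_mul_of_nonneg_right key2
        positivity
    _ = (a - β) * (a ^ 2 - 1) ^ (((γ:ℝ) - 1) / 2) * ((a - 1) / (a + 1)) ^ ((b - β) / 2) := by
        ring
end

section
/- Let q > 1 be real, γ ≥ 1 a natural number, and θ_1,...,θ_γ real. Let b = Σ_{k=1}^γ cos θ_k and suppose b is not an integer. Then ∏_{k=1}^γ (q+1-2√q cos θ_k) ≥ ((√q+1)/(√q-1))^{-(b+2)} · (q-1)^γ. -/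
open Real Finset

theorem stmt_17 (q : ℝ) (hq : 1 < q) (γ : ℕ) (hγ : 1 ≤ γ) (θ : Fin γ → ℝ)
    (b : ℝ) (hb : b = ∑ k, Real.cos (θ k)) (hbint : ¬∃ m : ℤ, (m : ℝ) = b) :
    ((Real.sqrt q + 1) / (Real.sqrt q - 1)) ^ (-(b + 2)) * (q - 1) ^ γ ≤
      ∏ k, (q + 1 - 2 * Real.sqrt q * Real.cos (θ k)) := by
  have hq0 : (0:ℝ) ≤ q := by linarith
  set s := Real.sqrt q with hs_def
  have hs1 : 1 < s := by
    rw [hs_def, show (1:ℝ) = Real.sqrt 1 by simp]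
    exact Real.sqrt_lt_sqrt (by norm_num) hq
  have hsq : s ^ 2 = q := Real.sq_sqrt hq0
  have h1 : (0:ℝ) < s - 1 := by linarith
  have h2 : (0:ℝ) < s + 1 := by linarith
  set L1 := Real.log (s - 1) with hL1
  set L2 := Real.log (s + 1) with hL2
  have hL : L1 ≤ L2 := Real.log_le_log h1 (by linarith)
  have key : ∀ k, Real.exp ((1 + Real.cos (θ k)) * L1 + (1 - Real.cos (θ k)) * L2)
      ≤ q + 1 - 2 * s * Real.cos (θ k) := by
    intro k
    set x := Real.cos (θ k) with hx_def
    have hx1 : -1 ≤ x := Real.neg_one_le_cos _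
    have hx2 : x ≤ 1 := Real.cos_le_one _
    have hgm := Real.geom_mean_le_arith_mean2_weighted
      (by linarith : (0:ℝ) ≤ (1+x)/2) (by linarith : (0:ℝ) ≤ (1-x)/2)
      (by positivity : (0:ℝ) ≤ (s-1)^2) (by positivity : (0:ℝ) ≤ (s+1)^2)
      (by ring)
    calc Real.exp ((1 + x) * L1 + (1 - x) * L2)
        = ((s-1)^2 : ℝ) ^ ((1+x)/2) * ((s+1)^2 : ℝ) ^ ((1-x)/2) := by
          rw [Real.exp_add,
            ← Real.rpow_natCast (s-1) 2, ← Real.rpow_natCast (s+1) 2,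
            ← Real.rpow_mul h1.le, ← Real.rpow_mul h2.le,
            Real.rpow_def_of_pos h1, Real.rpow_def_of_pos h2]
          push_cast
          rw [hL1, hL2]
          ring_nf
      _ ≤ (1+x)/2 * (s-1)^2 + (1-x)/2 * (s+1)^2 := hgm
      _ = q + 1 - 2*s*x := by rw [← hsq]; ring
  have hE : Real.exp (∑ k, ((1 + Real.cos (θ k)) * L1 + (1 - Real.cos (θ k)) * L2))
      ≤ ∏ k, (q + 1 - 2 * s * Real.cos (θ k)) := by
    rw [Real.exp_sum]
    exact Finset.prod_le_prod (fun k _ => (Real.exp_pos _).le) (fun k _ => key k)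
  have hsum : ∑ k, ((1 + Real.cos (θ k)) * L1 + (1 - Real.cos (θ k)) * L2)
      = ((γ:ℝ) + b) * L1 + ((γ:ℝ) - b) * L2 := by
    have heq : ∀ k, (1 + Real.cos (θ k)) * L1 + (1 - Real.cos (θ k)) * L2
        = (L1 + L2) + Real.cos (θ k) * (L1 - L2) := fun k => by ring
    simp only [heq]
    rw [Finset.sum_add_distrib, Finset.sum_const, Finset.card_univ, Fintype.card_fin,
      nsmul_eq_mul, ← Finset.sum_mul, ← hb]
    ring
  have hA : ((s + 1) / (s - 1)) ^ (-(b + 2)) * (q - 1) ^ γ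
      = Real.exp ((-(b+2)) * (L2 - L1) + (γ:ℝ) * (L1 + L2)) := by
    have hq1 : q - 1 = (s-1)*(s+1) := by rw [← hsq]; ring
    have hpos : (0:ℝ) < (s+1)/(s-1) := by positivity
    rw [Real.exp_add, Real.rpow_def_of_pos hpos,
      Real.log_div (by linarith) h1.ne']
    congr 1
    · rw [hL1, hL2]; ring_nf
    · have hqe : q - 1 = Real.exp (L1 + L2) := by
        rw [Real.exp_add, hL1, hL2, Real.exp_log h1, Real.exp_log h2, hq1]
      rw [hqe, ← Real.exp_nat_mul]
  calc ((s + 1) / (s - 1)) ^ (-(b + 2)) * (q - 1) ^ γ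
      = Real.exp ((-(b+2)) * (L2 - L1) + (γ:ℝ) * (L1 + L2)) := hA
    _ ≤ Real.exp (∑ k, ((1 + Real.cos (θ k)) * L1 + (1 - Real.cos (θ k)) * L2)) := by
        rw [Real.exp_le_exp, hsum]; nlinarith [hL]
    _ ≤ ∏ k, (q + 1 - 2 * s * Real.cos (θ k)) := hE
end
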